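/- In any tree obtained from a star with a white center and B black leaves by a sequence of operations that never creates a white leaf nor two adjacent white nodes of degree 2, the number of white nodes is at most 4·b − 5, where b ≥ 2 is the number of black nodes; in particular the tree has O(b) nodes. -/

import Mathlib

/-- In a tree with black/white nodes in which every white node has degree ≥ 2 and no
two adjacent white nodes both have degree 2, if there are `b ≥ 2` black nodes then the
number of white nodes is at most `4·b − 5` (in particular, `O(b)` nodes in total). -/
theorem stmt11 {V : Type*} [Fintype V] [DecidableEq V] (G : SimpleGraph V)
    [DecidableRel G.Adj] (hG : G.IsTree) (color : V → Bool)
    (hwdeg : ∀ v, color v = false → 2 ≤ G.degree v)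
    (hnoadj : ∀ u v, G.Adj u v → color u = false → color v = false →
      ¬(G.degree u = 2 ∧ G.degree v = 2))
    (hb : 2 ≤ (Finset.univ.filter (fun v => color v = true)).card) :
    (Finset.univ.filter (fun v => color v = false)).card ≤
      4 * (Finset.univ.filter (fun v => color v = true)).card - 5 := by
  classical
  set Wf := Finset.univ.filter (fun v => color v = false) with hWf
  set Bk := Finset.univ.filter (fun v => color v = true) with hBk
  set S := Wf.filter (fun v => G.degree v = 2) with hS
  set T := Wf.filter (fun v => ¬ G.degree v = 2) with hT
  have hWST : S.card + T.card = Wf.card :=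
    Finset.card_filter_add_card_filter_not _
  have hcardV : Bk.card + Wf.card = Fintype.card V := by
    have h := Finset.card_filter_add_card_filter_not
      (s := (Finset.univ : Finset V)) (p := fun v => color v = true)
    have e : (Finset.filter (fun a => ¬ color a = true) (Finset.univ : Finset V)) = Wf := by
      ext x; simp [hWf]
    rw [e] at h
    simpa [Finset.card_univ, hBk] using h
  -- every vertex has positive degree
  have hdegpos : ∀ v : V, 1 ≤ G.degree v := by
    intro v
    have h2 : 1 < Fintype.card V := by omega
    obtain ⟨u, hu⟩ := Fintype.exists_ne_of_one_lt_card h2 v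
    obtain ⟨p⟩ := hG.isConnected.preconnected v u
    have hnp : ¬ p.Nil := SimpleGraph.Walk.not_nil_of_ne (Ne.symm hu)
    rw [SimpleGraph.Walk.not_nil_iff] at hnp
    obtain ⟨w, hadj, -, -⟩ := hnp
    exact (G.degree_pos_iff_exists_adj v).2 ⟨w, hadj⟩
  -- total degree sum
  have htot : ∑ v, G.degree v = 2 * (Fintype.card V - 1) := by
    have h1 := SimpleGraph.sum_degrees_eq_twice_card_edges G
    have h2 := hG.card_edgeFinset
    omega
  -- splitting the sum
  have hsplit1 : ∑ v ∈ Bk, G.degree v + ∑ v ∈ Wf, G.degree v = ∑ v, G.degree v := by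
    rw [hBk, hWf]
    rw [← Finset.sum_filter_add_sum_filter_not Finset.univ (fun v => color v = true)]
    congr 1
    apply Finset.sum_congr
    · apply Finset.filter_congr; intro x _; simp
    · intro x _; rfl
  have hsplit2 : ∑ v ∈ S, G.degree v + ∑ v ∈ T, G.degree v = ∑ v ∈ Wf, G.degree v := by
    rw [hS, hT]
    exact Finset.sum_filter_add_sum_filter_not Wf (fun v => G.degree v = 2) _
  -- degree sums bounds
  have hSsum : ∑ v ∈ S, G.degree v = 2 * S.card := by
    rw [Finset.sum_congr rfl (fun v hv => (Finset.mem_filter.1 hv).2)]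
    simp [mul_comm]
    rfl
  have hTsum : 3 * T.card ≤ ∑ v ∈ T, G.degree v := by
    calc 3 * T.card = ∑ _v ∈ T, 3 := by simp [mul_comm]
    _ ≤ ∑ v ∈ T, G.degree v := by
        apply Finset.sum_le_sum
        intro v hv
        rw [hT, Finset.mem_filter, hWf, Finset.mem_filter] at hv
        have := hwdeg v hv.1.2
        omega
  have hBsum : Bk.card ≤ ∑ v ∈ Bk, G.degree v := by
    calc Bk.card = ∑ _v ∈ Bk, 1 := by simp
    _ ≤ ∑ v ∈ Bk, G.degree v := Finset.sum_le_sum fun v _ => hdegpos v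
  -- neighbors of S-vertices lie outside S
  have hnb : ∀ v ∈ S, G.neighborFinset v ⊆ Sᶜ := by
    intro v hv u hu
    rw [SimpleGraph.mem_neighborFinset] at hu
    rw [Finset.mem_compl]
    intro huS
    rw [hS, Finset.mem_filter, hWf, Finset.mem_filter] at hv huS
    exact hnoadj v u hu hv.1.2 huS.1.2 ⟨hv.2, huS.2⟩
  -- double counting: sum of degrees over S is at most over Sᶜ
  have key : ∑ v ∈ S, G.degree v ≤ ∑ u ∈ Sᶜ, G.degree u := by
    have step1 : ∀ v ∈ S, G.degree v = ∑ u ∈ Sᶜ, (if G.Adj v u then 1 else 0) := by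
      intro v hv
      rw [← Finset.card_filter, ← SimpleGraph.card_neighborFinset_eq_degree]
      congr 1
      ext u
      rw [Finset.mem_filter, SimpleGraph.mem_neighborFinset]
      constructor
      · intro h; exact ⟨hnb v hv (by rwa [SimpleGraph.mem_neighborFinset]), h⟩
      · rintro ⟨-, h⟩; exact h
    calc ∑ v ∈ S, G.degree v
        = ∑ v ∈ S, ∑ u ∈ Sᶜ, (if G.Adj v u then 1 else 0) :=
          Finset.sum_congr rfl step1
      _ = ∑ u ∈ Sᶜ, ∑ v ∈ S, (if G.Adj v u then 1 else 0) := Finset.sum_comm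
      _ ≤ ∑ u ∈ Sᶜ, G.degree u := by
          apply Finset.sum_le_sum
          intro u _
          rw [← Finset.card_filter, ← SimpleGraph.card_neighborFinset_eq_degree]
          apply Finset.card_le_card
          intro v hv
          rw [Finset.mem_filter] at hv
          rw [SimpleGraph.mem_neighborFinset]
          exact hv.2.symm
    -- done
  have hcompl : ∑ v ∈ S, G.degree v + ∑ u ∈ Sᶜ, G.degree u = ∑ v, G.degree v :=
    Finset.sum_add_sum_compl S _
  have hBle : Bk.card ≤ Fintype.card V := by omega
  omega
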